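/- Analytic form of the deterministic nested dropout loss: let X ∈ ℝ^{m×n}, W1 ∈ ℝ^{k×m}, W2 ∈ ℝ^{m×k}, and let p : {1,…,k} → [0,1] satisfy Σ_{b=1}^k p(b) = 1. For b ∈ {1,…,k} let π_b : ℝ^{k×n} → ℝ^{k×n} set to zero all rows with index greater than b. Define cumulative keep probabilities p_i = Σ_{b=i}^k p(b), the diagonal matrix P_D = diag(p_1,…,p_k), and P_L ∈ ℝ^{k×k} with (P_L)_{ij} = p_{max(i,j)}. Then Σ_{b=1}^k p(b) · (1/(2n))‖X − W2 π_b(W1 X)‖_F² = (1/(2n)) Tr(XᵀX) − (1/n) Tr(Xᵀ W2 P_D W1 X) + (1/(2n)) Tr(Xᵀ W1ᵀ ((W2ᵀW2) ∘ P_L) W1 X), where ∘ denotes the entrywise (Hadamard) product. -/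

import Mathlib

open Matrix BigOperators

/-- Squared Frobenius norm. -/
noncomputable def frobSq {a b : ℕ} (M : Matrix (Fin a) (Fin b) ℝ) : ℝ :=
  ∑ i, ∑ j, (M i j) ^ 2

lemma frobSq_eq_trace {a b : ℕ} (M : Matrix (Fin a) (Fin b) ℝ) :
    frobSq M = Matrix.trace (Mᵀ * M) := by
  simp only [frobSq, Matrix.trace, Matrix.diag_apply, Matrix.mul_apply, Matrix.transpose_apply]
  rw [Finset.sum_comm]
  simp [sq]

/-- Analytic form of the deterministic nested dropout loss:
`Σ_b p(b)·(1/(2n))‖X − W2 π_b(W1X)‖_F²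
  = (1/(2n))Tr(XᵀX) − (1/n)Tr(XᵀW2 P_D W1 X) + (1/(2n))Tr(XᵀW1ᵀ((W2ᵀW2)∘P_L)W1X)`,
where `π_b` zeroes the rows with index greater than `b`, `p_i = Σ_{b≥i} p(b)`,
`P_D = diag(p_1,…,p_k)` and `(P_L)_{ij} = p_{max(i,j)}`. -/
theorem deterministic_nested_dropout_loss (m k n : ℕ) (hm : 1 ≤ m) (hk : 1 ≤ k) (hn : 1 ≤ n)
    (X : Matrix (Fin m) (Fin n) ℝ)
    (W1 : Matrix (Fin k) (Fin m) ℝ) (W2 : Matrix (Fin m) (Fin k) ℝ)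
    (p : Fin k → ℝ) (hp0 : ∀ b, 0 ≤ p b) (hp1 : ∀ b, p b ≤ 1)
    (hpsum : ∑ b, p b = 1) :
    ∑ b : Fin k, p b * ((1 / (2 * (n : ℝ)))
        * frobSq (X - W2 * Matrix.of fun (i : Fin k) (j : Fin n) =>
            if i ≤ b then (W1 * X) i j else 0))
    = (1 / (2 * (n : ℝ))) * Matrix.trace (Xᵀ * X)
      - (1 / (n : ℝ)) * Matrix.trace (Xᵀ * W2
          * Matrix.diagonal (fun i : Fin k =>
              ∑ b ∈ Finset.univ.filter (fun b : Fin k => i ≤ b), p b)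
          * W1 * X)
      + (1 / (2 * (n : ℝ))) * Matrix.trace (Xᵀ * W1ᵀ
          * Matrix.hadamard (W2ᵀ * W2)
              (Matrix.of fun i j : Fin k =>
                ∑ b ∈ Finset.univ.filter (fun b : Fin k => max i j ≤ b), p b)
          * W1 * X) := by
  have hn' : (n : ℝ) ≠ 0 := by positivity
  set Y : Matrix (Fin k) (Fin n) ℝ := W1 * X with hY
  set E : Fin k → Matrix (Fin k) (Fin k) ℝ :=
    fun b => Matrix.diagonal (fun i => if i ≤ b then (1:ℝ) else 0) with hE
  set q : Fin k → ℝ :=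
    fun i => ∑ b ∈ Finset.univ.filter (fun b : Fin k => i ≤ b), p b with hq
  have hM : ∀ b : Fin k,
      (Matrix.of fun (i : Fin k) (j : Fin n) => if i ≤ b then Y i j else 0) = E b * Y := by
    intro b; ext i j
    simp [hE, Matrix.diagonal_mul, ite_mul]
  -- sum of weighted masks is the diagonal matrix
  have hD : ∑ b, p b • E b = Matrix.diagonal q := by
    ext i j
    simp only [Matrix.sum_apply, Matrix.smul_apply, hE, Matrix.diagonal_apply, smul_eq_mul]
    by_cases h : i = j
    · subst h
      simp only [if_pos rfl]
      rw [hq]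
      simp only [Finset.sum_filter]
      exact Finset.sum_congr rfl fun b _ => by by_cases hib : i ≤ b <;> simp [hib]
    · simp [h]
  -- sum of weighted sandwiched matrices is the hadamard product
  have hH : ∑ b, p b • (E b * (W2ᵀ * W2) * E b)
      = Matrix.hadamard (W2ᵀ * W2)
          (Matrix.of fun i j : Fin k => ∑ b ∈ Finset.univ.filter
            (fun b : Fin k => max i j ≤ b), p b) := by
    ext i j
    have hija : ∀ b : Fin k, (E b * (W2ᵀ * W2) * E b) i j
        = (if i ≤ b then (1:ℝ) else 0) * (W2ᵀ * W2) i j * (if j ≤ b then (1:ℝ) else 0) := by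
      intro b
      rw [hE]
      rw [Matrix.mul_diagonal, Matrix.diagonal_mul]
    simp only [Matrix.sum_apply, Matrix.smul_apply, smul_eq_mul, hija,
      Matrix.hadamard_apply, Matrix.of_apply]
    rw [Finset.sum_filter, Finset.mul_sum]
    refine Finset.sum_congr rfl fun b _ => ?_
    by_cases h1 : i ≤ b <;> by_cases h2 : j ≤ b <;>
      simp [h1, h2, max_le_iff] <;> ring
  -- per-b expansion of the squared Frobenius norm
  have expand : ∀ b : Fin k,
      frobSq (X - W2 * (E b * Y))
        = Matrix.trace (Xᵀ * X)
          - 2 * Matrix.trace ((Xᵀ * W2) * E b * Y)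
          + Matrix.trace (Yᵀ * (E b * (W2ᵀ * W2) * E b) * Y) := by
    intro b
    rw [frobSq_eq_trace]
    have hEs : (E b)ᵀ = E b := by rw [hE]; exact Matrix.diagonal_transpose _
    have h1 : (X - W2 * (E b * Y))ᵀ * (X - W2 * (E b * Y))
        = Xᵀ * X - Xᵀ * (W2 * (E b * Y)) - (W2 * (E b * Y))ᵀ * X
          + (W2 * (E b * Y))ᵀ * (W2 * (E b * Y)) := by
      rw [Matrix.transpose_sub]
      rw [Matrix.sub_mul, Matrix.mul_sub, Matrix.mul_sub]
      abel
    rw [h1]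
    rw [Matrix.trace_add, Matrix.trace_sub, Matrix.trace_sub]
    have h2 : Matrix.trace ((W2 * (E b * Y))ᵀ * X)
        = Matrix.trace ((Xᵀ * W2) * E b * Y) :=
      calc Matrix.trace ((W2 * (E b * Y))ᵀ * X)
          = Matrix.trace (((W2 * (E b * Y))ᵀ * X)ᵀ) := (Matrix.trace_transpose _).symm
        _ = Matrix.trace (Xᵀ * (W2 * (E b * Y))) := by
              rw [Matrix.transpose_mul, Matrix.transpose_transpose]
        _ = Matrix.trace ((Xᵀ * W2) * E b * Y) := by simp only [Matrix.mul_assoc]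
    have h3 : Matrix.trace (Xᵀ * (W2 * (E b * Y)))
        = Matrix.trace ((Xᵀ * W2) * E b * Y) := by
      simp only [Matrix.mul_assoc]
    have h4 : (W2 * (E b * Y))ᵀ * (W2 * (E b * Y))
        = Yᵀ * (E b * (W2ᵀ * W2) * E b) * Y := by
      rw [Matrix.transpose_mul, Matrix.transpose_mul, hEs]
      simp only [Matrix.mul_assoc]
    rw [h2, h3, h4]
    ring
  -- key identity without the 1/(2n) factors
  have key : ∑ b : Fin k, p b * frobSq (X - W2 * (E b * Y))
      = Matrix.trace (Xᵀ * X)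
        - 2 * Matrix.trace (Xᵀ * W2 * Matrix.diagonal q * W1 * X)
        + Matrix.trace (Xᵀ * W1ᵀ
            * Matrix.hadamard (W2ᵀ * W2)
                (Matrix.of fun i j : Fin k =>
                  ∑ b ∈ Finset.univ.filter (fun b : Fin k => max i j ≤ b), p b)
            * W1 * X) := by
    simp only [expand]
    rw [Finset.sum_congr rfl (fun b _ => by ring :
      ∀ b ∈ Finset.univ, p b * (Matrix.trace (Xᵀ * X)
          - 2 * Matrix.trace ((Xᵀ * W2) * E b * Y)
          + Matrix.trace (Yᵀ * (E b * (W2ᵀ * W2) * E b) * Y))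
        = p b * Matrix.trace (Xᵀ * X)
          - 2 * (p b * Matrix.trace ((Xᵀ * W2) * E b * Y))
          + p b * Matrix.trace (Yᵀ * (E b * (W2ᵀ * W2) * E b) * Y))]
    rw [Finset.sum_add_distrib, Finset.sum_sub_distrib, ← Finset.sum_mul, hpsum, one_mul,
      ← Finset.mul_sum]
    congr 1
    · congr 1
      congr 1
      have step : ∀ b : Fin k, p b * Matrix.trace ((Xᵀ * W2) * E b * Y)
          = Matrix.trace ((Xᵀ * W2) * (p b • E b) * Y) := by
        intro b
        rw [Matrix.mul_smul, Matrix.smul_mul, Matrix.trace_smul, smul_eq_mul]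
      simp only [step]
      rw [← Matrix.trace_sum]
      congr 1
      rw [← Matrix.sum_mul, ← Matrix.mul_sum, hD, hY]
      simp only [Matrix.mul_assoc]
    · have step : ∀ b : Fin k, p b * Matrix.trace (Yᵀ * (E b * (W2ᵀ * W2) * E b) * Y)
          = Matrix.trace (Yᵀ * (p b • (E b * (W2ᵀ * W2) * E b)) * Y) := by
        intro b
        rw [Matrix.mul_smul, Matrix.smul_mul, Matrix.trace_smul, smul_eq_mul]
      simp only [step]
      rw [← Matrix.trace_sum]
      congr 1
      rw [← Matrix.sum_mul, ← Matrix.mul_sum, hH, hY, Matrix.transpose_mul]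
      simp only [Matrix.mul_assoc]
  calc ∑ b : Fin k, p b * ((1 / (2 * (n : ℝ)))
        * frobSq (X - W2 * Matrix.of fun (i : Fin k) (j : Fin n) =>
            if i ≤ b then Y i j else 0))
      = (1 / (2 * (n : ℝ))) * ∑ b : Fin k, p b * frobSq (X - W2 * (E b * Y)) := by
        rw [Finset.mul_sum]
        exact Finset.sum_congr rfl fun b _ => by rw [hM b]; ring
    _ = _ := by
        rw [key]
        field_simp
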